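/- Let M be a reduced multiplication R-module and N a submodule. Then the following are equivalent: (a) for all a, b ∈ R, if Ann_R(aM) = Ann_R(bM) and aM ⊆ N then bM ⊆ N; (b) for all a, b ∈ R, if Ann_R(aM) ⊆ Ann_R(bM) and aM ⊆ N then bM ⊆ N. -/

import Mathlib

variable {R : Type*} [CommRing R] {M : Type*} [AddCommGroup M] [Module R M]

/-- `M` is a multiplication module: every submodule is `IM` for some ideal `I`. -/
def IsMultiplicationModule (R M : Type*) [CommRing R] [AddCommGroup M] [Module R M] : Prop :=
  ∀ N : Submodule R M, ∃ I : Ideal R, N = I • (⊤ : Submodule R M)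

/-- A prime submodule. -/
def Submodule.IsPrimeSubmodule (P : Submodule R M) : Prop :=
  P ≠ ⊤ ∧ ∀ (r : R) (m : M), r • m ∈ P → m ∈ P ∨ r ∈ P.colon ⊤

/-- `M` is reduced: the intersection of all prime submodules is zero. -/
def IsReducedModule (R M : Type*) [CommRing R] [AddCommGroup M] [Module R M] : Prop :=
  sInf {P : Submodule R M | P.IsPrimeSubmodule} = ⊥

/-- A minimal prime submodule of `M`. -/
def Submodule.IsMinimalPrime (P : Submodule R M) : Prop :=
  P.IsPrimeSubmodule ∧ ∀ Q : Submodule R M, Q.IsPrimeSubmodule → Q ≤ P → Q = P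

/-- `𝔓_K`: the intersection of all minimal prime submodules containing `K`
(equal to `M` if there are none). -/
def primeRad (K : Submodule R M) : Submodule R M :=
  sInf {P : Submodule R M | P.IsMinimalPrime ∧ K ≤ P}

/-- `V(K)`: the set of minimal prime submodules containing `K`. -/
def Vset (K : Submodule R M) : Set (Submodule R M) :=
  {P : Submodule R M | P.IsMinimalPrime ∧ K ≤ P}

/-- A quasi `z°`-submodule. -/
def IsQuasiZSubmodule (N : Submodule R M) : Prop :=
  N ≠ ⊤ ∧ ∀ a ∈ N.colon ⊤, primeRad (Ideal.span {a} • (⊤ : Submodule R M)) ≤ N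

/-- `𝔓_I` for an ideal: intersection of all minimal prime ideals of `R` containing `I`. -/
def idealPrimeRad (I : Ideal R) : Ideal R :=
  sInf {p : Ideal R | p ∈ minimalPrimes R ∧ I ≤ p}

/-- A `z°`-ideal of `R`. -/
def IsZIdeal (I : Ideal R) : Prop :=
  I ≠ ⊤ ∧ ∀ a ∈ I, idealPrimeRad (Ideal.span {a}) ≤ I

/-- `(0 :_M J)` for an ideal `J`. -/
def pointAnn (J : Ideal R) : Submodule R M where
  carrier := {m : M | ∀ j ∈ J, j • m = 0}
  zero_mem' := by intro j _; simp
  add_mem' := by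
    intro a b ha hb j hj
    rw [smul_add, ha j hj, hb j hj, add_zero]
  smul_mem' := by
    intro c m hm j hj
    rw [smul_comm, hm j hj, smul_zero]



lemma mem_ann_iff' (r c : R) :
    r ∈ (⊥ : Submodule R M).colon ((Ideal.span {c} • (⊤ : Submodule R M) : Submodule R M) : Set M) ↔
      ∀ m : M, (r * c) • m = 0 := by
  rw [Submodule.mem_colon]
  constructor
  · intro h m
    have := h (c • m) (Submodule.smul_mem_smul (Ideal.mem_span_singleton_self c) trivial)
    simpa [smul_smul] using this
  · intro h p hp
    refine Submodule.smul_induction_on hp ?_ ?_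
    · intro s hs m _
      obtain ⟨t, rfl⟩ := Ideal.mem_span_singleton.mp hs
      have : r • (c * t) • m = t • ((r * c) • m) := by
        rw [smul_smul, smul_smul]; ring_nf
      simp [this, h m]
    · intro x y hx hy
      simp only [Submodule.mem_bot] at *
      rw [smul_add, hx, hy, add_zero]

lemma red_sq' (hred : IsReducedModule R M) (s : R) (m : M) (h : s • s • m = 0) : s • m = 0 := by
  have : s • m ∈ sInf {P : Submodule R M | P.IsPrimeSubmodule} := by
    refine Submodule.mem_sInf.mpr fun P hP => ?_
    rcases hP.2 s (s • m) (by rw [h]; exact P.zero_mem) with h1 | h2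
    · exact h1
    · exact Submodule.mem_colon.mp h2 m trivial
  rwa [hred, Submodule.mem_bot] at this

theorem stmt6 (hmul : IsMultiplicationModule R M) (hred : IsReducedModule R M)
    (N : Submodule R M) :
    (∀ a b : R,
        (⊥ : Submodule R M).colon ((Ideal.span {a} • (⊤ : Submodule R M) : Submodule R M) : Set M) =
          (⊥ : Submodule R M).colon ((Ideal.span {b} • (⊤ : Submodule R M) : Submodule R M) : Set M) →
        Ideal.span {a} • (⊤ : Submodule R M) ≤ N →
        Ideal.span {b} • (⊤ : Submodule R M) ≤ N) ↔
      (∀ a b : R,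
        (⊥ : Submodule R M).colon ((Ideal.span {a} • (⊤ : Submodule R M) : Submodule R M) : Set M) ≤
          (⊥ : Submodule R M).colon ((Ideal.span {b} • (⊤ : Submodule R M) : Submodule R M) : Set M) →
        Ideal.span {a} • (⊤ : Submodule R M) ≤ N →
        Ideal.span {b} • (⊤ : Submodule R M) ≤ N)  := by
  constructor
  · intro ha a b hle haN
    have key : (⊥ : Submodule R M).colon ((Ideal.span {a * b} • (⊤ : Submodule R M) : Submodule R M) : Set M) =
        (⊥ : Submodule R M).colon ((Ideal.span {b} • (⊤ : Submodule R M) : Submodule R M) : Set M) := by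
      apply le_antisymm
      · intro r hr
        rw [mem_ann_iff'] at hr ⊢
        have hrb : r * b ∈ (⊥ : Submodule R M).colon ((Ideal.span {a} • (⊤ : Submodule R M) : Submodule R M) : Set M) := by
          rw [mem_ann_iff']
          intro m
          have := hr m
          rw [show r * b * a = r * (a * b) by ring]
          exact this
        have hrb2 := (mem_ann_iff' (r * b) b).mp (hle hrb)
        intro m
        apply red_sq' hred (r * b) m
        have : (r * b) • (r * b) • m = r • ((r * b * b) • m) := by
          rw [smul_smul, smul_smul]; ring_nf
        rw [this, hrb2 m, smul_zero]
      · intro r hr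
        rw [mem_ann_iff'] at hr ⊢
        intro m
        have : (r * (a * b)) • m = a • ((r * b) • m) := by
          rw [smul_smul]; ring_nf
        rw [this, hr m, smul_zero]
    refine ha (a * b) b key (le_trans ?_ haN)
    exact Submodule.smul_mono_left (Ideal.span_singleton_le_span_singleton.mpr ⟨b, rfl⟩)
  · intro hb a b heq
    exact hb a b heq.le
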